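/- Let R be a finite set of positive integers with gcd(R) = 1 and r = max(R) > 1, and let s ≥ 2 be an integer. For every t with 1 ≤ t ≤ r, the t-toggle matrix T(t) over ℤ_s can be expressed as a product of exactly 2r−3 R-step matrices over ℤ_s. -/

import Mathlib

/-- An `R`-step matrix over `ℤ_s`: obtained from `I_r` by replacing, for some row `t`,
the `t`-th row by a row `(β_1, …, β_r)` in which `β_i` is allowed to be nonzero only if
there exists `j ∈ R` with `i + j ≡ t (mod r)` (all 1-indexed). -/
def IsStepMat (R : Finset ℕ) (r s : ℕ) (B : Matrix (Fin r) (Fin r) (ZMod s)) : Prop :=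
  ∃ t : Fin r,
    (∀ i j : Fin r, i ≠ t → B i j = if i = j then (1 : ZMod s) else 0) ∧
    ∀ j : Fin r, (¬ ∃ d ∈ R, ((j : ℕ) + 1 + d) % r = ((t : ℕ) + 1) % r) → B t j = 0

/-- The `t`-toggle matrix over `ℤ_s`: obtained from `I_r` by replacing row `t` by the
row all of whose entries are `-1`. -/
def toggleMat (r s : ℕ) (t : Fin r) : Matrix (Fin r) (Fin r) (ZMod s) :=
  Matrix.of fun i j => if i = t then -1 else if i = j then 1 else 0

/-- A toggle matrix is a `t`-toggle matrix for some `t`. -/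
def IsToggleMat (r s : ℕ) (T : Matrix (Fin r) (Fin r) (ZMod s)) : Prop :=
  ∃ t : Fin r, T = toggleMat r s t


lemma ham_aux : ∀ N : ℕ, ∀ S : Finset ℕ, S.card ≤ N → ∀ r : ℕ, 0 < r →
    Nat.gcd (S.gcd id) r = 1 →
    ∃ f : ℕ → ℕ, f 0 = 0 ∧ (∀ i, i + 1 < r → ∃ d ∈ S, f (i + 1) = f i + d) ∧
      ∀ m n, m < r → n < r → f m % r = f n % r → m = n := by
  intro N
  induction N with
  | zero =>
    intro S hS r hr hgcd
    have hSe : S = ∅ := Finset.card_eq_zero.mp (Nat.le_zero.mp hS)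
    subst hSe
    simp only [Finset.gcd_empty, Nat.gcd_zero_left] at hgcd
    exact ⟨fun _ => 0, rfl, fun i hi => by omega, fun m n hm hn _ => by omega⟩
  | succ N IH =>
    intro S hS r hr hgcd
    rcases S.eq_empty_or_nonempty with hSe | ⟨a, ha⟩
    · subst hSe
      simp only [Finset.gcd_empty, Nat.gcd_zero_left] at hgcd
      exact ⟨fun _ => 0, rfl, fun i hi => by omega, fun m n hm hn _ => by omega⟩
    · set S₀ := S.erase a with hS₀
      set h := S₀.gcd id with hh
      set g := Nat.gcd h r with hg
      have hg0 : 0 < g := Nat.gcd_pos_of_pos_right _ hr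
      have hgr : g ∣ r := Nat.gcd_dvd_right _ _
      have hgh : g ∣ h := Nat.gcd_dvd_left _ _
      set q := r / g with hqdef
      have hq : g * q = r := Nat.mul_div_cancel' hgr
      have hq0 : 0 < q := Nat.div_pos (Nat.le_of_dvd hr hgr) hg0
      have hdvdS₀ : ∀ x ∈ S₀, g ∣ x := fun x hx => hgh.trans (Finset.gcd_dvd hx)
      have hag : Nat.gcd a g = 1 := by
        have d1 : Nat.gcd a g ∣ S.gcd id := by
          refine Finset.dvd_gcd fun x hx => ?_
          rcases eq_or_ne x a with rfl | hxa
          · exact Nat.gcd_dvd_left _ _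
          · exact (Nat.gcd_dvd_right a g).trans (hdvdS₀ x (Finset.mem_erase.mpr ⟨hxa, hx⟩))
        have d2 : Nat.gcd a g ∣ r := (Nat.gcd_dvd_right a g).trans hgr
        exact Nat.dvd_one.mp (hgcd ▸ Nat.dvd_gcd d1 d2)
      set S' := S₀.image (· / g) with hS'
      have hcard : S'.card ≤ N := by
        have h1 : S'.card ≤ S₀.card := Finset.card_image_le
        have h2 : S₀.card = S.card - 1 := Finset.card_erase_of_mem ha
        have h3 : 1 ≤ S.card := Finset.card_pos.mpr ⟨a, ha⟩
        omega
      have hgcd' : Nat.gcd (S'.gcd id) q = 1 := by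
        have hcq : Nat.gcd (S'.gcd id) q ∣ q := Nat.gcd_dvd_right _ _
        have hgc : g * Nat.gcd (S'.gcd id) q ∣ g := by
          rw [hg]
          refine Nat.dvd_gcd ?_ ?_
          · refine Finset.dvd_gcd fun x hx => ?_
            have hc : Nat.gcd (S'.gcd id) q ∣ x / g :=
              (Nat.gcd_dvd_left _ _).trans (Finset.gcd_dvd (Finset.mem_image_of_mem _ hx))
            calc g * Nat.gcd (S'.gcd id) q ∣ g * (x / g) := mul_dvd_mul_left g hc
              _ = x := Nat.mul_div_cancel' (hdvdS₀ x hx)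
          · calc g * Nat.gcd (S'.gcd id) q ∣ g * q := mul_dvd_mul_left g hcq
              _ = r := hq
        have := (Nat.mul_dvd_mul_iff_left hg0).mp (show g * ((S'.gcd id).gcd q) ∣ g * 1 by rwa [mul_one])
        exact Nat.dvd_one.mp this
      obtain ⟨f', hf0, hfstep, hfinj⟩ := IH S' hcard q hq0 hgcd'
      set T := f' (q - 1) with hT
      refine ⟨fun i => (i / q) * (a + g * T) + g * f' (i % q), by simp [hf0], ?_, ?_⟩
      · -- step property
        intro i hi
        have hi₀ : i % q < q := Nat.mod_lt _ hq0
        have hdm : q * (i / q) + i % q = i := Nat.div_add_mod i q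
        by_cases hcase : i % q + 1 < q
        · have hrep : i + 1 = q * (i / q) + (i % q + 1) := by omega
          have h1 : (i + 1) / q = i / q := by
            rw [hrep, Nat.mul_add_div hq0, Nat.div_eq_of_lt hcase, Nat.add_zero]
          have h2 : (i + 1) % q = i % q + 1 := by
            rw [hrep, Nat.mul_add_mod, Nat.mod_eq_of_lt hcase]
          obtain ⟨d', hd'S, hd'⟩ := hfstep (i % q) hcase
          obtain ⟨x, hx, hxd⟩ := Finset.mem_image.mp hd'S
          have hgx : g ∣ x := hdvdS₀ x hx
          have hgdx : g * d' = x := by rw [← hxd]; exact Nat.mul_div_cancel' hgx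
          refine ⟨x, Finset.erase_subset a S hx, ?_⟩
          show (i+1) / q * (a + g * T) + g * f' ((i+1) % q)
              = i / q * (a + g * T) + g * f' (i % q) + x
          rw [h1, h2, hd', ← hgdx]
          ring
        · have hi₀q : i % q = q - 1 := by omega
          have hexp : q * (i / q + 1) = q * (i / q) + q := by ring
          have hrep : i + 1 = q * (i / q + 1) := by omega
          have h1 : (i + 1) / q = i / q + 1 := by
            rw [hrep, Nat.mul_div_cancel_left _ hq0]
          have h2 : (i + 1) % q = 0 := by rw [hrep, Nat.mul_mod_right]
          refine ⟨a, ha, ?_⟩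
          show (i+1) / q * (a + g * T) + g * f' ((i+1) % q)
              = i / q * (a + g * T) + g * f' (i % q) + a
          rw [h1, h2, hf0, hi₀q, ← hT]
          ring
      · -- injectivity
        intro m n hm hn hmn
        have hjm : m / q < g := by
          rw [Nat.div_lt_iff_lt_mul hq0]; omega
        have hjn : n / q < g := by
          rw [Nat.div_lt_iff_lt_mul hq0]; omega
        have hmod : (m / q) * (a + g * T) + g * f' (m % q)
            ≡ (n / q) * (a + g * T) + g * f' (n % q) [MOD r] := hmn
        have hmodg := hmod.of_dvd hgr
        have e1 : ∀ k : ℕ, (k / q) * (a + g * T) + g * f' (k % q) ≡ (k / q) * a [MOD g] := by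
          intro k
          have : (k / q) * (a + g * T) + g * f' (k % q)
              = (k / q) * a + ((k / q) * T + f' (k % q)) * g := by ring
          rw [Nat.ModEq, this, Nat.add_mul_mod_self_right]
        have e2 : (m / q) * a ≡ (n / q) * a [MOD g] :=
          (e1 m).symm.trans (hmodg.trans (e1 n))
        have e3 : m / q ≡ n / q [MOD g] :=
          Nat.ModEq.cancel_right_of_coprime (by rwa [Nat.gcd_comm] at hag) e2
        have hjeq : m / q = n / q := by
          have := e3
          unfold Nat.ModEq at this
          rwa [Nat.mod_eq_of_lt hjm, Nat.mod_eq_of_lt hjn] at this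
        rw [hjeq] at hmod
        have hmod2 : g * f' (m % q) ≡ g * f' (n % q) [MOD r] :=
          Nat.ModEq.add_left_cancel' _ hmod
        rw [← hq] at hmod2
        have hmod3 : f' (m % q) ≡ f' (n % q) [MOD q] :=
          Nat.ModEq.mul_left_cancel' (by omega) hmod2
        have := hfinj (m % q) (n % q) (Nat.mod_lt _ hq0) (Nat.mod_lt _ hq0) hmod3
        have hdm : q * (m / q) + m % q = m := Nat.div_add_mod m q
        have hdn : q * (n / q) + n % q = n := Nat.div_add_mod n q
        rw [← hdm, ← hdn, hjeq, this]

namespace ToggleAux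
open Matrix

variable (p s : ℕ) (u : ℕ → Fin (p + 2))

def Ee (a b : Fin (p + 2)) : Matrix (Fin (p + 2)) (Fin (p + 2)) (ZMod s) :=
  Matrix.single a b 1

def Mk (k : ℕ) : Matrix (Fin (p + 2)) (Fin (p + 2)) (ZMod s) :=
  1 + ∑ i ∈ Finset.Ico k (p + 1), ∑ j ∈ Finset.Ico (i + 1) (p + 2), Ee p s (u i) (u j)

def Gm (k : ℕ) : Matrix (Fin (p + 2)) (Fin (p + 2)) (ZMod s) :=
  1 + Ee p s (u k) (u (k + 1))

def Cm (k : ℕ) : Matrix (Fin (p + 2)) (Fin (p + 2)) (ZMod s) :=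
  1 - Ee p s (u k) (u (k + 1))

def Bm : Matrix (Fin (p + 2)) (Fin (p + 2)) (ZMod s) :=
  1 - Ee p s (u 0) (u 0) - Ee p s (u 0) (u 0) - Ee p s (u 0) (u 1)

def Nk (k : ℕ) : Matrix (Fin (p + 2)) (Fin (p + 2)) (ZMod s) :=
  Mk p s u k - Ee p s (u 0) (u 0) - Ee p s (u 0) (u 0)
    - ∑ j ∈ Finset.Ico 1 (p + 2), Ee p s (u 0) (u j)

variable (hinj : ∀ i j, i < p + 2 → j < p + 2 → u i = u j → i = j)

lemma Msucc (k : ℕ) (hk : k ≤ p) :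
    Mk p s u k = Mk p s u (k + 1) + ∑ j ∈ Finset.Ico (k + 1) (p + 2), Ee p s (u k) (u j) := by
  unfold Mk
  rw [Finset.sum_eq_sum_Ico_succ_bot (show k < p + 1 by omega)]
  abel

include hinj


lemma pick (a : Fin (p + 2)) (k l : ℕ) (hk : k ≤ l) (hl : l ≤ p + 1) :
    Ee p s a (u l) * Mk p s u k = ∑ j ∈ Finset.Ico l (p + 2), Ee p s a (u j) := by
  unfold Mk
  rw [mul_add, mul_one, Finset.mul_sum]
  have hE : ∀ i ∈ Finset.Ico k (p + 1),
      Ee p s a (u l) * (∑ j ∈ Finset.Ico (i + 1) (p + 2), Ee p s (u i) (u j))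
        = if l = i then ∑ j ∈ Finset.Ico (i + 1) (p + 2), Ee p s a (u j) else 0 := by
    intro i hi
    rw [Finset.mul_sum]
    by_cases h : l = i
    · subst h
      rw [if_pos rfl]
      refine Finset.sum_congr rfl fun j hj => ?_
      unfold Ee
      rw [Matrix.single_mul_single_same, one_mul]
    · rw [if_neg h]
      refine Finset.sum_eq_zero fun j hj => ?_
      have hi2 := (Finset.mem_Ico.mp hi).2
      exact Matrix.single_mul_single_of_ne _ _ _ _
        (fun he => h (hinj l i (by omega) (by omega) he)) _
  rw [Finset.sum_congr rfl hE, Finset.sum_ite_eq]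
  by_cases hmem : l ∈ Finset.Ico k (p + 1)
  · rw [if_pos hmem]
    exact (Finset.sum_eq_sum_Ico_succ_bot (show l < p + 2 by omega) (fun j => Ee p s a (u j))).symm
  · have hl1 : l = p + 1 := by
      rcases Finset.mem_Ico.not.mp hmem with h
      omega
    subst hl1
    rw [if_neg hmem, add_zero, Nat.Ico_succ_singleton, Finset.sum_singleton]

lemma miss (a : Fin (p + 2)) : Ee p s a (u 0) * Mk p s u 1 = Ee p s a (u 0) := by
  unfold Mk
  rw [mul_add, mul_one, Finset.mul_sum]
  have hE : ∀ i ∈ Finset.Ico 1 (p + 1),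
      Ee p s a (u 0) * (∑ j ∈ Finset.Ico (i + 1) (p + 2), Ee p s (u i) (u j)) = 0 := by
    intro i hi
    rw [Finset.mul_sum]
    refine Finset.sum_eq_zero fun j hj => ?_
    have hi1 := (Finset.mem_Ico.mp hi).1
    have hi2 := (Finset.mem_Ico.mp hi).2
    exact Matrix.single_mul_single_of_ne _ _ _ _
      (fun he => by have := hinj 0 i (by omega) (by omega) he; omega) _
  rw [Finset.sum_congr rfl hE, Finset.sum_const, smul_zero, add_zero]


lemma gather : ∀ n k, k + n = p + 1 →
    ((List.range' k n).map (Gm p s u)).prod = Mk p s u k := by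
  intro n
  induction n with
  | zero =>
    intro k hk
    have : k = p + 1 := by omega
    subst this
    simp only [List.range'_zero, List.map_nil, List.prod_nil]
    unfold Mk
    rw [Finset.Ico_self, Finset.sum_empty, add_zero]
  | succ n IHn =>
    intro k hk
    rw [List.range'_succ, List.map_cons, List.prod_cons, IHn (k + 1) (by omega)]
    unfold Gm
    rw [add_mul, one_mul, pick p s u hinj (u k) (k + 1) (k + 1) le_rfl (by omega)]
    exact (Msucc p s u k (by omega)).symm

lemma btstep : Bm p s u * Mk p s u 1 = Nk p s u 1 := by
  unfold Bm Nk
  rw [sub_mul, sub_mul, sub_mul, one_mul, miss p s u hinj,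
    pick p s u hinj (u 0) 1 1 le_rfl (by omega)]

lemma cstep (k : ℕ) (h1 : 1 ≤ k) (h2 : k ≤ p) :
    Cm p s u k * Nk p s u k = Nk p s u (k + 1) := by
  have hE0 : ∀ b, Ee p s (u k) (u (k + 1)) * Ee p s (u 0) b = 0 := by
    intro b
    refine Matrix.single_mul_single_of_ne _ _ _ _ (fun he => ?_) _
    have := hinj (k + 1) 0 (by omega) (by omega) he
    omega
  unfold Cm Nk
  rw [sub_mul, one_mul]
  rw [mul_sub, mul_sub, mul_sub, hE0, Finset.mul_sum]
  rw [Finset.sum_congr rfl (fun j _ => hE0 (u j)), Finset.sum_const, smul_zero]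
  rw [pick p s u hinj (u k) k (k + 1) (by omega) (by omega)]
  rw [Msucc p s u k h2]
  abel

lemma cleanup : ∀ n, n ≤ p →
    (((List.range' 1 n).map (Cm p s u)).reverse).prod * Nk p s u 1 = Nk p s u (n + 1) := by
  intro n
  induction n with
  | zero => simp
  | succ n IHn =>
    intro h
    have hconcat : List.range' 1 (n + 1) = List.range' 1 n ++ [1 + n] := by
      have : List.range' 1 (n + 1) = List.range' 1 n ++ [1 + 1 * n] := List.range'_concat
      simpa using this
    rw [hconcat, List.map_append, List.reverse_append]
    simp only [List.map_cons, List.map_nil, List.reverse_cons, List.reverse_nil,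
      List.nil_append, List.singleton_append, List.prod_cons]
    rw [mul_assoc, IHn (by omega)]
    have : 1 + n = n + 1 := by omega
    rw [this]
    exact cstep p s u hinj (n + 1) (by omega) (by omega)

lemma final (t : Fin (p + 2)) (hu0 : u 0 = t)
    (hsurj : ∀ b : Fin (p + 2), ∃ m, m < p + 2 ∧ u m = b) :
    Nk p s u (p + 1) = toggleMat (p + 2) s t := by
  unfold Nk Mk toggleMat
  rw [Finset.Ico_self, Finset.sum_empty, add_zero, hu0]
  ext a b
  simp only [Matrix.sub_apply, Matrix.one_apply, Matrix.sum_apply, Matrix.of_apply]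
  by_cases hat : a = t
  · subst hat
    rw [if_pos rfl]
    by_cases hbt : b = a
    · subst hbt
      have h1 : Ee p s b b b b = 1 := Matrix.single_apply_same _ _ _
      have hsum : ∀ j ∈ Finset.Ico 1 (p + 2), Ee p s b (u j) b b = 0 := by
        intro j hj
        refine Matrix.single_apply_of_ne _ _ _ _ _ (fun hcon => ?_)
        have hj1 := (Finset.mem_Ico.mp hj).1
        have hj2 := (Finset.mem_Ico.mp hj).2
        have huj : u j = u 0 := by rw [hu0]; exact hcon.2
        have := hinj j 0 (by omega) (by omega) huj
        omega
      rw [h1, Finset.sum_congr rfl hsum, Finset.sum_const, smul_zero, if_pos rfl]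
      ring
    · obtain ⟨m, hm, hmb⟩ := hsurj b
      have hm1 : 1 ≤ m := by
        rcases Nat.eq_zero_or_pos m with h0 | h0
        · exfalso; apply hbt; rw [← hmb, h0, hu0]
        · exact h0
      have h1 : Ee p s a a a b = 0 :=
        Matrix.single_apply_of_ne _ _ _ _ _ (fun hcon => hbt hcon.2.symm)
      have hsum : ∀ j ∈ Finset.Ico 1 (p + 2), Ee p s a (u j) a b
          = if j = m then 1 else 0 := by
        intro j hj
        have hj1 := (Finset.mem_Ico.mp hj).1
        have hj2 := (Finset.mem_Ico.mp hj).2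
        by_cases hjm : j = m
        · subst hjm
          rw [if_pos rfl, hmb]
          exact Matrix.single_apply_same _ _ _
        · rw [if_neg hjm]
          refine Matrix.single_apply_of_ne _ _ _ _ _ (fun hcon => ?_)
          exact hjm (hinj j m (by omega) (by omega) (by rw [hcon.2, hmb]))
      rw [h1, Finset.sum_congr rfl hsum, Finset.sum_ite_eq',
        if_pos (Finset.mem_Ico.mpr ⟨hm1, hm⟩), if_neg (fun h => hbt h.symm)]
      ring
  · rw [if_neg hat]
    have h1 : Ee p s t t a b = 0 :=
      Matrix.single_apply_of_ne _ _ _ _ _ (fun hcon => hat hcon.1.symm)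
    have hsum : ∀ j ∈ Finset.Ico 1 (p + 2), Ee p s t (u j) a b = 0 := fun j hj =>
      Matrix.single_apply_of_ne _ _ _ _ _ (fun hcon => hat hcon.1.symm)
    rw [h1, Finset.sum_congr rfl hsum, Finset.sum_const, smul_zero]
    ring

omit hinj in
lemma stepG (R : Finset ℕ) (hrR : p + 2 ∈ R) (k : ℕ)
    (hlink : ∃ d ∈ R, ((u (k + 1) : ℕ) + 1 + d) % (p + 2) = ((u k : ℕ) + 1) % (p + 2)) :
    IsStepMat R (p + 2) s (Gm p s u k) := by
  refine ⟨u k, ?_, ?_⟩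
  · intro i j hi
    unfold Gm Ee
    rw [Matrix.add_apply, Matrix.one_apply,
      Matrix.single_apply_of_ne _ _ _ _ _ (fun hc => hi hc.1.symm), add_zero]
  · intro j hj
    have h1 : u k ≠ j := fun he =>
      hj ⟨p + 2, hrR, by rw [← he]; exact Nat.add_mod_right _ _⟩
    have h2 : u (k + 1) ≠ j := fun he => by
      obtain ⟨d, hd, hmod⟩ := hlink
      exact hj ⟨d, hd, by rw [← he]; exact hmod⟩
    unfold Gm Ee
    rw [Matrix.add_apply, Matrix.one_apply, if_neg h1,
      Matrix.single_apply_of_ne _ _ _ _ _ (fun hc => h2 hc.2), add_zero]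

omit hinj in
lemma stepC (R : Finset ℕ) (hrR : p + 2 ∈ R) (k : ℕ)
    (hlink : ∃ d ∈ R, ((u (k + 1) : ℕ) + 1 + d) % (p + 2) = ((u k : ℕ) + 1) % (p + 2)) :
    IsStepMat R (p + 2) s (Cm p s u k) := by
  refine ⟨u k, ?_, ?_⟩
  · intro i j hi
    unfold Cm Ee
    rw [Matrix.sub_apply, Matrix.one_apply,
      Matrix.single_apply_of_ne _ _ _ _ _ (fun hc => hi hc.1.symm), sub_zero]
  · intro j hj
    have h1 : u k ≠ j := fun he =>
      hj ⟨p + 2, hrR, by rw [← he]; exact Nat.add_mod_right _ _⟩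
    have h2 : u (k + 1) ≠ j := fun he => by
      obtain ⟨d, hd, hmod⟩ := hlink
      exact hj ⟨d, hd, by rw [← he]; exact hmod⟩
    unfold Cm Ee
    rw [Matrix.sub_apply, Matrix.one_apply, if_neg h1,
      Matrix.single_apply_of_ne _ _ _ _ _ (fun hc => h2 hc.2), sub_zero]

omit hinj in
lemma stepB (R : Finset ℕ) (hrR : p + 2 ∈ R)
    (hlink : ∃ d ∈ R, ((u 1 : ℕ) + 1 + d) % (p + 2) = ((u 0 : ℕ) + 1) % (p + 2)) :
    IsStepMat R (p + 2) s (Bm p s u) := by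
  refine ⟨u 0, ?_, ?_⟩
  · intro i j hi
    unfold Bm Ee
    rw [Matrix.sub_apply, Matrix.sub_apply, Matrix.sub_apply, Matrix.one_apply,
      Matrix.single_apply_of_ne _ _ _ _ _ (fun hc => hi hc.1.symm),
      Matrix.single_apply_of_ne (α := ZMod s) (u 0) (u 1) 1 i j
        (fun hc => hi hc.1.symm), sub_zero, sub_zero, sub_zero]
  · intro j hj
    have h1 : u 0 ≠ j := fun he =>
      hj ⟨p + 2, hrR, by rw [← he]; exact Nat.add_mod_right _ _⟩
    have h2 : u 1 ≠ j := fun he => by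
      obtain ⟨d, hd, hmod⟩ := hlink
      exact hj ⟨d, hd, by rw [← he]; exact hmod⟩
    unfold Bm Ee
    rw [Matrix.sub_apply, Matrix.sub_apply, Matrix.sub_apply, Matrix.one_apply, if_neg h1,
      Matrix.single_apply_of_ne _ _ _ _ _ (fun hc => h1 hc.2),
      Matrix.single_apply_of_ne (α := ZMod s) (u 0) (u 1) 1 (u 0) j
        (fun hc => h2 hc.2), sub_zero, sub_zero, sub_zero]

end ToggleAux

/-- If `gcd(R) = 1` and `r = max(R) > 1`, then every `t`-toggle matrix over `ℤ_s` is a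
product of exactly `2r - 3` `R`-step matrices. -/
theorem toggle_eq_prod_step (R : Finset ℕ) (r s : ℕ)
    (hrR : r ∈ R) (hmax : ∀ j ∈ R, j ≤ r) (hpos : ∀ j ∈ R, 0 < j)
    (hgcd : R.gcd id = 1) (hr : 1 < r) (hs : 2 ≤ s) (t : Fin r) :
    ∃ L : List (Matrix (Fin r) (Fin r) (ZMod s)),
      L.length = 2 * r - 3 ∧ (∀ B ∈ L, IsStepMat R r s B) ∧ L.prod = toggleMat r s t := by
  obtain ⟨p, rfl⟩ : ∃ p, r = p + 2 := ⟨r - 2, by omega⟩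
  obtain ⟨f, hf0, hstep, hfinj⟩ := ham_aux R.card R le_rfl (p + 2) (by omega)
    (by rw [hgcd]; exact Nat.gcd_one_left _)
  set u : ℕ → Fin (p + 2) :=
    fun i => ⟨(((t : ℕ) : ZMod (p + 2)) - ((f i : ℕ) : ZMod (p + 2))).val,
      ZMod.val_lt _⟩ with hu
  have hucast : ∀ i, ((u i : ℕ) : ZMod (p + 2))
      = ((t : ℕ) : ZMod (p + 2)) - ((f i : ℕ) : ZMod (p + 2)) := by
    intro i
    rw [hu]
    show ((((t : ℕ) : ZMod (p + 2)) - ((f i : ℕ) : ZMod (p + 2))).val : ZMod (p + 2)) = _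
    exact ZMod.natCast_rightInverse _
  have hinj : ∀ i j, i < p + 2 → j < p + 2 → u i = u j → i = j := by
    intro i j hi hj hij
    have h1 : ((t : ℕ) : ZMod (p + 2)) - ((f i : ℕ) : ZMod (p + 2))
        = ((t : ℕ) : ZMod (p + 2)) - ((f j : ℕ) : ZMod (p + 2)) := by
      rw [← hucast i, ← hucast j, hij]
    have h2 : ((f i : ℕ) : ZMod (p + 2)) = ((f j : ℕ) : ZMod (p + 2)) :=
      sub_right_inj.mp h1
    exact hfinj i j hi hj ((ZMod.natCast_eq_natCast_iff _ _ _).mp h2)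
  have hu0 : u 0 = t := by
    apply Fin.ext
    rw [hu]
    show (((t : ℕ) : ZMod (p + 2)) - ((f 0 : ℕ) : ZMod (p + 2))).val = (t : ℕ)
    rw [hf0, Nat.cast_zero, sub_zero, ZMod.val_natCast, Nat.mod_eq_of_lt t.isLt]
  have hlink : ∀ i, i + 1 < p + 2 →
      ∃ d ∈ R, ((u (i + 1) : ℕ) + 1 + d) % (p + 2) = ((u i : ℕ) + 1) % (p + 2) := by
    intro i hi
    obtain ⟨d, hdR, hd⟩ := hstep i hi
    refine ⟨d, hdR, ?_⟩
    have : ((u (i + 1) : ℕ) + 1 + d) ≡ ((u i : ℕ) + 1) [MOD (p + 2)] := by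
      apply (ZMod.natCast_eq_natCast_iff _ _ _).mp
      push_cast
      rw [hucast, hucast, hd]
      push_cast
      ring
    exact this
  have hsurj : ∀ b : Fin (p + 2), ∃ m, m < p + 2 ∧ u m = b := by
    have hinjF : Function.Injective (fun i : Fin (p + 2) => u i.val) := by
      intro i j hij
      exact Fin.ext (hinj i.val j.val i.isLt j.isLt hij)
    have hsurjF := Finite.injective_iff_surjective.mp hinjF
    intro b
    obtain ⟨i, hi⟩ := hsurjF b
    exact ⟨i.val, i.isLt, hi⟩
  have hne : ∀ k, k + 1 < p + 2 → u k ≠ u (k + 1) := by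
    intro k hk he
    have := hinj k (k + 1) (by omega) (by omega) he
    omega
  refine ⟨(((List.range' 1 p).map (ToggleAux.Cm p s u)).reverse)
      ++ ([ToggleAux.Bm p s u] ++ ((List.range' 1 p).map (ToggleAux.Gm p s u))), ?_, ?_, ?_⟩
  · simp only [List.length_append, List.length_reverse, List.length_map,
      List.length_range', List.length_cons, List.length_nil]
    omega
  · intro B hB
    rcases List.mem_append.mp hB with hB | hB
    · rw [List.mem_reverse] at hB
      obtain ⟨k, hk, rfl⟩ := List.mem_map.mp hB
      rw [List.mem_range'_1] at hk
      exact ToggleAux.stepC p s u R hrR k (hlink k (by omega))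
    · rcases List.mem_append.mp hB with hB | hB
      · rw [List.mem_singleton] at hB
        subst hB
        exact ToggleAux.stepB p s u R hrR (hlink 0 (by omega))
      · obtain ⟨k, hk, rfl⟩ := List.mem_map.mp hB
        rw [List.mem_range'_1] at hk
        exact ToggleAux.stepG p s u R hrR k (hlink k (by omega))
  · rw [List.prod_append, List.prod_append, List.prod_cons, List.prod_nil, mul_one]
    rw [ToggleAux.gather p s u hinj p 1 (by omega)]
    rw [ToggleAux.btstep p s u hinj]
    rw [ToggleAux.cleanup p s u hinj p le_rfl]
    exact ToggleAux.final p s u hinj t hu0 hsurj
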